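/- Let q be a Boolean conjunctive query with m atoms, Dˣ a set of exogenous tuples with Dˣ ⊭ q, and Dⁿ a set of candidate missing endogenous tuples with Dˣ ∪ Dⁿ ⊨ q. If t ∈ Dⁿ is an actual Why-No cause for q, then there exists a contingency set Γ for t with |Γ| ≤ m − 1; consequently the minimum contingency size for t is at most m − 1 and the responsibility of t is at least 1/m. -/
import Mathlib


/-- An atom of a Boolean conjunctive query: a relation symbol applied to a
tuple (list) of variables, marked endogenous (`endo = true`) or exogenous. -/
structure DBAtom (Rel Var : Type) where
  rel : Rel
  args : List Var
  endo : Bool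
deriving DecidableEq

/-- A database tuple: it belongs to one relation and carries a tuple of constants. -/
structure DBTup (Rel Const : Type) where
  rel : Rel
  args : List Const
deriving DecidableEq

/-- The tuple obtained by applying a valuation `θ` to an atom. -/
def DBAtom.app {Rel Var Const : Type} (g : DBAtom Rel Var) (θ : Var → Const) :
    DBTup Rel Const :=
  ⟨g.rel, g.args.map θ⟩

/-- `dbSat D q` holds iff `D ⊨ q`: there is a valuation `θ` of the variables of `q`
into the domain with `θ(g) ∈ D` for every atom `g` of `q`. -/
def dbSat {Rel Var Const : Type} (D : Finset (DBTup Rel Const))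
    (q : Finset (DBAtom Rel Var)) : Prop :=
  ∃ θ : Var → Const, ∀ g ∈ q, g.app θ ∈ D

/-- `t` is an actual cause for `q` in `D` (with endogenous tuples `Dn`):
there is a contingency set `Γ ⊆ Dn` with `t ∉ Γ` such that
`D − Γ ⊨ q` and `D − Γ − {t} ⊭ q`. -/
def isActualCause {Rel Var Const : Type} [DecidableEq Rel] [DecidableEq Const]
    (q : Finset (DBAtom Rel Var)) (D Dn : Finset (DBTup Rel Const))
    (t : DBTup Rel Const) : Prop :=
  ∃ Γ : Finset (DBTup Rel Const), Γ ⊆ Dn ∧ t ∉ Γ ∧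
    dbSat (D \ Γ) q ∧ ¬ dbSat ((D \ Γ).erase t) q

/-- The n-lineage of `q` on `D`: the family of the sets `c^θ ∩ Dⁿ`
over all valuations `θ` with `θ(g) ∈ D` for all atoms `g` of `q`, where
`c^θ = {θ(g) : g an atom of q}`. -/
def nLineage {Rel Var Const : Type} [DecidableEq Rel] [DecidableEq Const]
    (q : Finset (DBAtom Rel Var)) (D Dn : Finset (DBTup Rel Const)) :
    Set (Finset (DBTup Rel Const)) :=
  {c | ∃ θ : Var → Const, (∀ g ∈ q, g.app θ ∈ D) ∧
    c = (q.image fun g => g.app θ) ∩ Dn}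

/-- `Γ` is a Why-No contingency set for `t`: `Γ ⊆ Dⁿ`, `t ∉ Γ`,
`Dˣ ∪ Γ ⊭ q` and `Dˣ ∪ Γ ∪ {t} ⊨ q`. -/
def isWhyNoContingency {Rel Var Const : Type} [DecidableEq Rel] [DecidableEq Const]
    (q : Finset (DBAtom Rel Var)) (Dx Dn : Finset (DBTup Rel Const))
    (t : DBTup Rel Const) (Γ : Finset (DBTup Rel Const)) : Prop :=
  Γ ⊆ Dn ∧ t ∉ Γ ∧ ¬ dbSat (Dx ∪ Γ) q ∧ dbSat (insert t (Dx ∪ Γ)) q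

/-- Let `q` be a Boolean conjunctive query with `m` atoms, `Dˣ` exogenous
tuples with `Dˣ ⊭ q`, and `Dⁿ` candidate missing endogenous tuples with `Dˣ ∪ Dⁿ ⊨ q`.
If `t ∈ Dⁿ` is an actual Why-No cause for `q`, then there is a contingency set `Γ` for `t`
with `|Γ| ≤ m − 1`; consequently the minimum contingency size for `t` is at most `m − 1`
and the responsibility `1/(1 + min_Γ |Γ|)` of `t` is at least `1/m`. -/
theorem statement3 {Rel Var Const : Type}
    [DecidableEq Rel] [DecidableEq Var] [DecidableEq Const]
    (q : Finset (DBAtom Rel Var)) (Dx Dn : Finset (DBTup Rel Const))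
    (hdisj : Disjoint Dx Dn)
    (hx : ¬ dbSat (Const := Const) Dx q) (hD : dbSat (Dx ∪ Dn) q)
    (t : DBTup Rel Const) (ht : t ∈ Dn)
    (hcause : ∃ Γ, isWhyNoContingency q Dx Dn t Γ) :
    (∃ Γ, isWhyNoContingency q Dx Dn t Γ ∧ Γ.card ≤ q.card - 1) ∧
    sInf {n : ℕ | ∃ Γ, isWhyNoContingency q Dx Dn t Γ ∧ Γ.card = n} ≤ q.card - 1 ∧
    (1 : ℝ) / (q.card : ℝ) ≤
      1 / (1 + ((sInf {n : ℕ | ∃ Γ, isWhyNoContingency q Dx Dn t Γ ∧ Γ.card = n} : ℕ) : ℝ)) := by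
  obtain ⟨Γ, hΓsub, htΓ, hnsat, θ, hθ⟩ := hcause
  -- q is nonempty
  have hqne : q.Nonempty := by
    rcases Finset.eq_empty_or_nonempty q with h | h
    · exact absurd ⟨θ, by simp [h]⟩ hx
    · exact h
  -- some atom maps to t
  have htim : ∃ g ∈ q, g.app θ = t := by
    by_contra hcon
    push_neg at hcon
    exact hnsat ⟨θ, fun g hg => by
      have := hθ g hg
      rcases Finset.mem_insert.mp this with h | h
      · exact absurd h (hcon g hg)
      · exact h⟩
  set Γ' := ((q.image fun g => g.app θ) ∩ Dn).erase t with hΓ'def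
  have htmem : t ∈ (q.image fun g => g.app θ) ∩ Dn := by
    obtain ⟨g, hg, hgt⟩ := htim
    exact Finset.mem_inter.mpr ⟨Finset.mem_image.mpr ⟨g, hg, hgt⟩, ht⟩
  -- Γ' ⊆ Γ
  have hΓ'Γ : Γ' ⊆ Γ := by
    intro x hx'
    have hxne : x ≠ t := Finset.ne_of_mem_erase hx'
    have hx2 := Finset.mem_of_mem_erase hx'
    obtain ⟨hxim, hxDn⟩ := Finset.mem_inter.mp hx2
    obtain ⟨g, hg, hgx⟩ := Finset.mem_image.mp hxim
    have := hθ g hg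
    rw [hgx] at this
    rcases Finset.mem_insert.mp this with h | h
    · exact absurd h hxne
    · rcases Finset.mem_union.mp h with h | h
      · exact absurd hxDn (Finset.disjoint_left.mp hdisj h)
      · exact h
  have hΓ'Dn : Γ' ⊆ Dn := fun x hx' =>
    (Finset.mem_inter.mp (Finset.mem_of_mem_erase hx')).2
  have htΓ' : t ∉ Γ' := Finset.notMem_erase t _
  have hnsat' : ¬ dbSat (Dx ∪ Γ') q := by
    intro ⟨θ', hθ'⟩
    exact hnsat ⟨θ', fun g hg => Finset.union_subset_union_right hΓ'Γ (hθ' g hg)⟩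
  have hsat' : dbSat (insert t (Dx ∪ Γ')) q := by
    refine ⟨θ, fun g hg => ?_⟩
    have h1 := hθ g hg
    rcases Finset.mem_insert.mp h1 with h | h
    · exact Finset.mem_insert.mpr (Or.inl h)
    · rcases Finset.mem_union.mp h with h | h
      · exact Finset.mem_insert.mpr (Or.inr (Finset.mem_union_left _ h))
      · by_cases he : g.app θ = t
        · exact Finset.mem_insert.mpr (Or.inl he)
        · refine Finset.mem_insert.mpr (Or.inr (Finset.mem_union_right _ ?_))
          exact Finset.mem_erase.mpr ⟨he, Finset.mem_inter.mpr
            ⟨Finset.mem_image.mpr ⟨g, hg, rfl⟩, hΓsub h⟩⟩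
  have hcont' : isWhyNoContingency q Dx Dn t Γ' := ⟨hΓ'Dn, htΓ', hnsat', hsat'⟩
  have hcard : Γ'.card ≤ q.card - 1 := by
    have h1 : Γ'.card = ((q.image fun g => g.app θ) ∩ Dn).card - 1 :=
      Finset.card_erase_of_mem htmem
    have h2 : ((q.image fun g => g.app θ) ∩ Dn).card ≤ q.card :=
      le_trans (Finset.card_le_card (Finset.inter_subset_left)) Finset.card_image_le
    omega
  refine ⟨⟨Γ', hcont', hcard⟩, ?_, ?_⟩
  · exact le_trans (Nat.sInf_le ⟨Γ', hcont', rfl⟩) hcard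
  · have hsinf : sInf {n : ℕ | ∃ Γ, isWhyNoContingency q Dx Dn t Γ ∧ Γ.card = n} ≤ q.card - 1 :=
      le_trans (Nat.sInf_le ⟨Γ', hcont', rfl⟩) hcard
    have hq1 : 1 ≤ q.card := Finset.card_pos.mpr hqne
    have hle : 1 + sInf {n : ℕ | ∃ Γ, isWhyNoContingency q Dx Dn t Γ ∧ Γ.card = n} ≤ q.card := by
      omega
    apply one_div_le_one_div_of_le
    · positivity
    · exact_mod_cast hle
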